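/- Irreducibility of the Fock representation: if V ⊆ R is a nonzero ℚ-linear subspace that is stable under multiplication by q_m for every m ≥ 1 and stable under the partial derivative ∂/∂q_m for every m ≥ 1, then V = R; in particular R is generated from the vacuum vector 1 by the multiplication operators. -/

import Mathlib

/- Irreducibility of the Fock representation on `R = ℚ[q₁,q₂,…]`: a nonzero
subspace stable under all multiplication operators `qₘ·` and all partial
derivatives `∂/∂qₘ` is everything. -/

open MvPolynomial

private lemma sum_pos_of_ne_zero (d : ℕ+ →₀ ℕ) (hd : d ≠ 0) :
    0 < d.sum fun _ e => e := by
  have h1 : d.sum (fun _ e => e) = Finsupp.degree d := by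
    rw [Finsupp.degree]
    rfl
  rw [h1]
  exact Nat.pos_of_ne_zero fun h => hd ((Finsupp.degree_eq_zero_iff d).mp h)

private lemma coeff_pderiv' (m : ℕ+) (u : ℕ+ →₀ ℕ) (p : MvPolynomial ℕ+ ℚ) :
    coeff u (pderiv m p) = (u m + 1) * coeff (u + Finsupp.single m 1) p := by
  classical
  induction p using MvPolynomial.induction_on' with
  | monomial s a =>
    rw [pderiv_monomial, coeff_monomial, coeff_monomial]
    by_cases hs : s m = 0
    · have h1 : s - Finsupp.single m 1 = s := by
        ext j
        simp only [Finsupp.tsub_apply, Finsupp.single_apply]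
        by_cases hj : m = j
        · subst hj; simp [hs]
        · simp [hj]
      rw [h1]
      have hne : ¬ (s = u + Finsupp.single m 1) := by
        intro h
        have := congrArg (fun f => f m) h
        simp [hs] at this
      rw [if_neg hne]
      by_cases h2 : s = u
      · rw [if_pos h2]
        have : s m = 0 := hs
        rw [← h2]
        simp [this]
      · rw [if_neg h2, mul_zero]
    · have key : (s - Finsupp.single m 1 = u) ↔ (s = u + Finsupp.single m 1) :=
        tsub_eq_iff_eq_add_of_le (Finsupp.single_le_iff.mpr (by omega))
      by_cases h2 : s - Finsupp.single m 1 = u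
      · have h3 : s = u + Finsupp.single m 1 := key.mp h2
        have h4 : s m = u m + 1 := by
          have := congrArg (fun f => f m) h3
          simpa using this
        rw [if_pos h2, if_pos h3, h4]
        push_cast
        ring
      · rw [if_neg h2, if_neg (fun h => h2 (key.mpr h)), mul_zero]
  | add p q hp hq =>
    simp only [map_add, coeff_add, hp, hq]
    ring

private lemma totalDegree_pderiv_lt (m : ℕ+) (p : MvPolynomial ℕ+ ℚ)
    (hp : 0 < p.totalDegree) : (pderiv m p).totalDegree < p.totalDegree := by
  rw [totalDegree, Finset.sup_lt_iff (by simpa using hp)]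
  intro u hu
  rw [mem_support_iff, coeff_pderiv'] at hu
  have h2 : coeff (u + Finsupp.single m 1) p ≠ 0 := by
    intro h; simp [h] at hu
  have h3 := le_totalDegree (mem_support_iff.mpr h2)
  have h4 : (u + Finsupp.single m 1).sum (fun _ e => e) = u.sum (fun _ e => e) + 1 := by
    rw [Finsupp.sum_add_index (by simp) (by intros; rfl)]
    simp
  omega

theorem fock_irreducible (V : Submodule ℚ (MvPolynomial ℕ+ ℚ)) (hV : V ≠ ⊥)
    (hmul : ∀ (m : ℕ+), ∀ p ∈ V, X m * p ∈ V)
    (hder : ∀ (m : ℕ+), ∀ p ∈ V, pderiv m p ∈ V) :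
    V = ⊤ := by
  classical
  -- constant-degree case
  have hconst : ∀ p ∈ V, p ≠ 0 → p.totalDegree = 0 → (1 : MvPolynomial ℕ+ ℚ) ∈ V := by
    intro p hpV hp0 h0
    set c := coeff 0 p with hc
    have hC : p = C c := by
      ext d
      by_cases hd : d = 0
      · subst hd; simp [hc]
      · rw [coeff_C, if_neg (Ne.symm hd)]
        refine coeff_eq_zero_of_totalDegree_lt ?_
        rw [h0]
        exact sum_pos_of_ne_zero d hd
    have hc0 : c ≠ 0 := fun h => hp0 (by rw [hC, h, map_zero])
    have : c⁻¹ • p = 1 := by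
      rw [hC, MvPolynomial.smul_eq_C_mul, ← map_mul, inv_mul_cancel₀ hc0, map_one]
    rw [← this]
    exact V.smul_mem _ hpV
  -- Step 1: 1 ∈ V
  have key : ∀ (n : ℕ) (p : MvPolynomial ℕ+ ℚ), p ∈ V → p ≠ 0 →
      p.totalDegree ≤ n → (1 : MvPolynomial ℕ+ ℚ) ∈ V := by
    intro n
    induction n with
    | zero =>
      intro p hpV hp0 hdeg
      exact hconst p hpV hp0 (Nat.le_zero.mp hdeg)
    | succ n ih =>
      intro p hpV hp0 hdeg
      by_cases h0 : p.totalDegree = 0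
      · exact hconst p hpV hp0 h0
      · -- find a monomial of maximal degree
        have hsupp : p.support.Nonempty := by
          rw [Finset.nonempty_iff_ne_empty]
          simpa [MvPolynomial.support_eq_empty] using hp0
        obtain ⟨d, hd, hdsum⟩ := Finset.exists_mem_eq_sup p.support hsupp
          (fun u => u.sum fun _ e => e)
        have hdsum' : d.sum (fun _ e => e) = p.totalDegree := hdsum.symm
        have hdpos : 0 < d.sum (fun _ e => e) := by rw [hdsum']; omega
        have hdne : d ≠ 0 := by
          intro h; rw [h] at hdpos; simp [Finsupp.sum_zero_index] at hdpos
        obtain ⟨m, hm⟩ := Finsupp.ne_iff.mp hdne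
        simp only [Finsupp.coe_zero, Pi.zero_apply] at hm
        set u := d - Finsupp.single m 1 with hu
        have hud : u + Finsupp.single m 1 = d := by
          ext j
          simp only [hu, Finsupp.add_apply, Finsupp.tsub_apply, Finsupp.single_apply]
          by_cases hj : m = j
          · subst hj; simp; omega
          · simp [hj]
        have hcoeff : coeff u (pderiv m p) ≠ 0 := by
          rw [coeff_pderiv', hud]
          have h5 : coeff d p ≠ 0 := mem_support_iff.mp hd
          positivity
        have hq0 : pderiv m p ≠ 0 := fun h => hcoeff (by rw [h]; simp)
        have hqdeg : (pderiv m p).totalDegree < p.totalDegree :=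
          totalDegree_pderiv_lt m p (by omega)
        exact ih _ (hder m p hpV) hq0 (by omega)
  obtain ⟨p, hpV, hp0⟩ := Submodule.exists_mem_ne_zero_of_ne_bot hV
  have h1 : (1 : MvPolynomial ℕ+ ℚ) ∈ V := key p.totalDegree p hpV hp0 le_rfl
  -- Step 2: V = ⊤
  rw [Submodule.eq_top_iff']
  intro p
  induction p using MvPolynomial.induction_on with
  | C a =>
    have : C a = a • (1 : MvPolynomial ℕ+ ℚ) := by
      rw [MvPolynomial.smul_eq_C_mul, mul_one]
    rw [this]
    exact V.smul_mem a h1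
  | add p q hp hq => exact V.add_mem hp hq
  | mul_X p m hp => exact (by simpa [mul_comm] using hmul m p hp)
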